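/- Let C ⊆ F_{q^m}^n be a generalized twisted Gabidulin code of dimension k < n defined by the space V = {f_0 x + f_1 x^{q^s} + ... + f_{k-1} x^{q^{s(k-1)}} + η f_0^{q^h} x^{q^{sk}} : f_i ∈ F_{q^m}} evaluated at n F_q-independent points, where gcd(m,s)=1. Then dim(C ∩ C^{q^s}) ≥ k - 2, where C^{q^s} = {(c_1^{q^s},...,c_n^{q^s}) : c ∈ C}. -/

import Mathlib

open Finset Module LinearMap

/-- coefficient extraction for tuples, as a function on ℕ -/
def coefN {k2 : ℕ} {F : Type*} [Zero F] (f : Fin k2 → F) (i : ℕ) : F :=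
  if h : i < k2 then f ⟨i, h⟩ else 0

lemma coefN_add {k2 : ℕ} {F : Type*} [Field F] (f g : Fin k2 → F) (i : ℕ) :
    coefN (f + g) i = coefN f i + coefN g i := by
  unfold coefN; split <;> simp

lemma coefN_smul {k2 : ℕ} {F : Type*} [Field F] (γ : F) (f : Fin k2 → F) (i : ℕ) :
    coefN (γ • f) i = γ * coefN f i := by
  unfold coefN; split <;> simp

lemma finrank_ker_comp {K M : Type*} [DivisionRing K] [AddCommGroup M] [Module K M]
    [FiniteDimensional K M] (f g : M →ₗ[K] M) :
    finrank K (LinearMap.ker (g ∘ₗ f)) ≤ finrank K (LinearMap.ker g) + finrank K (LinearMap.ker f) := by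
  set Kc := LinearMap.ker (g ∘ₗ f) with hKc
  set h : Kc →ₗ[K] M := f.domRestrict Kc with hh
  have h1 := LinearMap.finrank_range_add_finrank_ker h
  have h2 : LinearMap.range h ≤ LinearMap.ker g := by
    rintro y ⟨x, rfl⟩
    have hx : (g ∘ₗ f) (x : M) = 0 := x.2
    rw [LinearMap.comp_apply] at hx
    simpa [hh] using hx
  have h3 : Submodule.map Kc.subtype (LinearMap.ker h) ≤ LinearMap.ker f := by
    rintro y ⟨x, hx, rfl⟩
    simpa [hh] using hx
  have h4 : finrank K (LinearMap.ker h) ≤ finrank K (LinearMap.ker f) := by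
    rw [← Submodule.finrank_map_subtype_eq Kc (LinearMap.ker h)]
    exact Submodule.finrank_mono h3
  have h5 : finrank K (LinearMap.range h) ≤ finrank K (LinearMap.ker g) :=
    Submodule.finrank_mono h2
  have h6 : finrank K (LinearMap.range h) + finrank K (LinearMap.ker h) = finrank K Kc := h1
  omega

lemma fixed_aux {F : Type*} [Field F] [Fintype F] (q m s : ℕ) (hm : 0 < m)
    (hcard : Fintype.card F = q ^ m) (hgcd : Nat.gcd m s = 1) (y : F) (hy : y ^ q ^ s = y) :
    y ^ q = y := by
  have hqm : ∀ x : F, x ^ q ^ m = x := fun x => by rw [← hcard]; exact FiniteField.pow_card x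
  have hit : ∀ (e : ℕ) (x : F), x ^ q ^ e = x → ∀ t, x ^ q ^ (e * t) = x := by
    intro e x hx t
    induction t with
    | zero => simp
    | succ t ih => rw [mul_add, mul_one, pow_add, pow_mul, ih, hx]
  rcases Nat.eq_zero_or_pos s with hs0 | hs0
  · have hm1 : m = 1 := by rw [hs0] at hgcd; simpa using hgcd
    have h := hqm y
    rw [hm1, pow_one] at h
    exact h
  · have hcop : Nat.Coprime s m := Nat.coprime_comm.mp hgcd
    have htot := Nat.ModEq.pow_totient hcop
    have h1 : 1 ≤ s ^ m.totient := Nat.one_le_pow _ _ hs0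
    have hdvd : m ∣ s ^ m.totient - 1 := (Nat.modEq_iff_dvd' h1).mp htot.symm
    obtain ⟨v, hv⟩ := hdvd
    have hφ : 0 < m.totient := Nat.totient_pos.mpr hm
    have he : s * s ^ (m.totient - 1) = m * v + 1 := by
      have hpow : s ^ m.totient = s * s ^ (m.totient - 1) := by
        conv_lhs => rw [show m.totient = (m.totient - 1) + 1 by omega]
        rw [pow_succ']
      omega
    have hy1 : y ^ q ^ (s * s ^ (m.totient - 1)) = y := hit s y hy _
    rw [he] at hy1
    have hy2 : y ^ q ^ (m * v) = y := hit m y (hqm y) v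
    calc y ^ q = (y ^ q ^ (m * v)) ^ q := by rw [hy2]
      _ = y ^ q ^ (m * v + 1) := by rw [← pow_mul, ← pow_succ]
      _ = y := hy1

section Aux

variable {F : Type*} [Field F] (q s : ℕ) (Fq : Subfield F)
variable (haddt : ∀ (t : ℕ) (x y : F), (x + y) ^ q ^ t = x ^ q ^ t + y ^ q ^ t)
variable (hfixt : ∀ c : F, c ∈ Fq → ∀ t : ℕ, c ^ q ^ t = c)

/-- the σ-polynomial ∑_{i ≤ d} c i • x^{q^{s i}} as an `Fq`-linear map. -/
def Lp' (c : ℕ → F) (d : ℕ) : F →ₗ[Fq] F where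
  toFun x := ∑ i ∈ Finset.range (d + 1), c i * x ^ q ^ (s * i)
  map_add' x y := by
    rw [← Finset.sum_add_distrib]
    exact Finset.sum_congr rfl fun i _ => by rw [haddt, mul_add]
  map_smul' γ x := by
    have hsm : ∀ z : F, γ • z = (γ : F) * z := fun z => rfl
    simp only [RingHom.id_apply, hsm, mul_pow, Finset.mul_sum]
    refine Finset.sum_congr rfl fun i _ => ?_
    rw [hfixt (γ : F) γ.2 (s * i)]
    ring

/-- the map x ↦ x^{q^s} - α x -/
def Pm' (α : F) : F →ₗ[Fq] F where
  toFun x := x ^ q ^ s - α * x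
  map_add' x y := by
    show (x + y) ^ q ^ s - α * (x + y) = (x ^ q ^ s - α * x) + (y ^ q ^ s - α * y)
    rw [haddt]; ring
  map_smul' γ x := by
    have hsm : ∀ z : F, γ • z = (γ : F) * z := fun z => rfl
    simp only [RingHom.id_apply, hsm, mul_pow]
    rw [hfixt (γ : F) γ.2 s]
    ring

/-- the map x ↦ x^{q^t} -/
def Mq (t : ℕ) : F →ₗ[Fq] F where
  toFun x := x ^ q ^ t
  map_add' x y := haddt t x y
  map_smul' γ x := by
    have hsm : ∀ z : F, γ • z = (γ : F) * z := fun z => rfl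
    simp only [RingHom.id_apply, hsm, mul_pow]
    rw [hfixt (γ : F) γ.2 t]

lemma Mq_ker (hq0 : q ≠ 0) (t : ℕ) : LinearMap.ker (Mq q Fq haddt hfixt t) = ⊥ := by
  rw [LinearMap.ker_eq_bot']
  intro x hx
  have hx' : x ^ q ^ t = 0 := hx
  exact (pow_eq_zero_iff (pow_ne_zero t hq0)).mp hx'

/-- right division of a σ-polynomial by (σ - α), with remainder made explicit. -/
lemma orediv (hsubt : ∀ (t : ℕ) (x y : F), (x - y) ^ q ^ t = x ^ q ^ t - y ^ q ^ t) :
    ∀ (d : ℕ) (c : ℕ → F) (α : F), ∃ b : ℕ → F, b d = c (d + 1) ∧ ∀ x : F,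
      ∑ j ∈ Finset.range (d + 2), c j * x ^ q ^ (s * j)
        = (∑ i ∈ Finset.range (d + 1), b i * (x ^ q ^ s - α * x) ^ q ^ (s * i))
          + (c 0 + b 0 * α) * x := by
  intro d
  induction d with
  | zero =>
    intro c α
    refine ⟨fun _ => c 1, rfl, fun x => ?_⟩
    have h1 : ∑ j ∈ Finset.range (0 + 2), c j * x ^ q ^ (s * j)
        = c 0 * x + c 1 * x ^ q ^ s := by
      rw [show (0 : ℕ) + 2 = 1 + 1 from rfl, Finset.sum_range_succ, Finset.sum_range_one]
      norm_num
    have h2 : ∑ i ∈ Finset.range (0 + 1), (fun _ => c 1) i * (x ^ q ^ s - α * x) ^ q ^ (s * i)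
        = c 1 * (x ^ q ^ s - α * x) := by
      rw [show (0 : ℕ) + 1 = 1 from rfl, Finset.sum_range_one]
      norm_num
    rw [h1, h2]
    ring
  | succ d IH =>
    intro c α
    set c' : ℕ → F := fun j =>
      if j = d + 1 then c (d + 1) + c (d + 2) * α ^ q ^ (s * (d + 1)) else c j with hc'def
    obtain ⟨b', hb'd, hb'⟩ := IH c' α
    refine ⟨fun i => if i = d + 1 then c (d + 2) else b' i, by norm_num, fun x => ?_⟩
    have hc'0 : c' 0 = c 0 := by rw [hc'def]; norm_num
    have hc'top : c' (d + 1) = c (d + 1) + c (d + 2) * α ^ q ^ (s * (d + 1)) := by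
      rw [hc'def]; norm_num
    have hb0 : (fun i => if i = d + 1 then c (d + 2) else b' i) 0 = b' 0 := by norm_num
    have key := hb' x
    rw [show d + 2 = (d + 1) + 1 from rfl, Finset.sum_range_succ, hc'top, hc'0] at key
    have hcs : ∑ j ∈ Finset.range (d + 1), c' j * x ^ q ^ (s * j)
        = ∑ j ∈ Finset.range (d + 1), c j * x ^ q ^ (s * j) := by
      refine Finset.sum_congr rfl fun j hj => ?_
      have hj' := Finset.mem_range.mp hj
      simp only [hc'def]
      rw [if_neg (by omega)]
    rw [hcs] at key
    have egoal1 : ∑ j ∈ Finset.range (d + 1 + 2), c j * x ^ q ^ (s * j)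
        = (∑ j ∈ Finset.range (d + 1), c j * x ^ q ^ (s * j))
          + c (d + 1) * x ^ q ^ (s * (d + 1)) + c (d + 2) * x ^ q ^ (s * (d + 2)) := by
      rw [show d + 1 + 2 = (d + 1 + 1) + 1 from rfl, Finset.sum_range_succ, Finset.sum_range_succ]
    have egoal2 : ∑ i ∈ Finset.range (d + 1 + 1),
          (fun i => if i = d + 1 then c (d + 2) else b' i) i * (x ^ q ^ s - α * x) ^ q ^ (s * i)
        = (∑ i ∈ Finset.range (d + 1), b' i * (x ^ q ^ s - α * x) ^ q ^ (s * i))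
          + c (d + 2) * (x ^ q ^ s - α * x) ^ q ^ (s * (d + 1)) := by
      rw [Finset.sum_range_succ]
      congr 1
      · refine Finset.sum_congr rfl fun i hi => ?_
        have hi' := Finset.mem_range.mp hi
        simp only
        rw [if_neg (by omega)]
      · simp
    have e6 : (x ^ q ^ s - α * x) ^ q ^ (s * (d + 1))
        = x ^ q ^ (s * (d + 2)) - α ^ q ^ (s * (d + 1)) * x ^ q ^ (s * (d + 1)) := by
      rw [hsubt, mul_pow, ← pow_mul, ← pow_add]
      rw [show s + s * (d + 1) = s * (d + 2) by ring]
    rw [egoal1, egoal2, e6, hb0]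
    linear_combination key

lemma kerPm_le [Fintype F] (hq0 : q ≠ 0)
    (hmem : ∀ y : F, y ^ q ^ s = y → y ∈ Fq) (α : F) :
    finrank Fq (LinearMap.ker (Pm' q s Fq haddt hfixt α)) ≤ 1 := by
  by_cases hbot : LinearMap.ker (Pm' q s Fq haddt hfixt α) = ⊥
  · rw [hbot, finrank_bot]; omega
  · obtain ⟨w, hw, hw0⟩ := (Submodule.ne_bot_iff _).mp hbot
    rw [LinearMap.mem_ker] at hw
    have hw' : w ^ q ^ s = α * w := sub_eq_zero.mp hw
    have hle : LinearMap.ker (Pm' q s Fq haddt hfixt α) ≤ Submodule.span Fq {w} := by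
      intro x hx
      rw [LinearMap.mem_ker] at hx
      have hx' : x ^ q ^ s = α * x := sub_eq_zero.mp hx
      rcases eq_or_ne x 0 with rfl | hx0
      · exact Submodule.zero_mem _
      · have hα : α ≠ 0 := by
          intro h0
          rw [h0, zero_mul] at hx'
          exact hx0 ((pow_eq_zero_iff (pow_ne_zero s hq0)).mp hx')
        have hyq : (x * w⁻¹) ^ q ^ s = x * w⁻¹ := by
          rw [mul_pow, inv_pow, hx', hw', mul_inv]
          field_simp
        rw [Submodule.mem_span_singleton]
        refine ⟨⟨x * w⁻¹, hmem _ hyq⟩, ?_⟩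
        show (x * w⁻¹) * w = x
        field_simp
    exact (Submodule.finrank_mono hle).trans (le_of_eq (finrank_span_singleton hw0))

lemma kerbound [Fintype F] (hq0 : q ≠ 0)
    (hsubt : ∀ (t : ℕ) (x y : F), (x - y) ^ q ^ t = x ^ q ^ t - y ^ q ^ t)
    (hmem : ∀ y : F, y ^ q ^ s = y → y ∈ Fq) :
    ∀ (d : ℕ) (c : ℕ → F), (∃ i, i ≤ d ∧ c i ≠ 0) →
      finrank Fq (LinearMap.ker (Lp' q s Fq haddt hfixt c d)) ≤ d := by
  intro d
  induction d with
  | zero =>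
    rintro c ⟨i, hi, hci⟩
    interval_cases i
    have hb : LinearMap.ker (Lp' q s Fq haddt hfixt c 0) = ⊥ := by
      rw [LinearMap.ker_eq_bot']
      intro x hx
      have hx' : c 0 * x = 0 := by
        have hs : ∑ i ∈ Finset.range 1, c i * x ^ q ^ (s * i) = 0 := hx
        simpa using hs
      rcases mul_eq_zero.mp hx' with h | h
      · exact absurd h hci
      · exact h
    rw [hb, finrank_bot]
  | succ d IH =>
    rintro c ⟨i, hi, hci⟩
    by_cases htop : c (d + 1) = 0
    · have heq : Lp' q s Fq haddt hfixt c (d + 1) = Lp' q s Fq haddt hfixt c d := by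
        apply LinearMap.ext
        intro x
        show ∑ i ∈ Finset.range (d + 1 + 1), c i * x ^ q ^ (s * i)
            = ∑ i ∈ Finset.range (d + 1), c i * x ^ q ^ (s * i)
        rw [Finset.sum_range_succ, htop, zero_mul, add_zero]
      have hex : ∃ i, i ≤ d ∧ c i ≠ 0 := by
        refine ⟨i, ?_, hci⟩
        by_contra hgt
        have : i = d + 1 := by omega
        rw [this] at hci
        exact hci htop
      rw [heq]
      exact (IH c hex).trans (Nat.le_succ d)
    · by_cases hker : LinearMap.ker (Lp' q s Fq haddt hfixt c (d + 1)) = ⊥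
      · rw [hker, finrank_bot]; omega
      · obtain ⟨u, hu, hu0⟩ := (Submodule.ne_bot_iff _).mp hker
        rw [LinearMap.mem_ker] at hu
        set α := u ^ q ^ s * u⁻¹ with hαdef
        obtain ⟨b, hbd, hid⟩ := orediv q s hsubt d c α
        have hPu : u ^ q ^ s - α * u = 0 := by
          rw [hαdef, mul_assoc, inv_mul_cancel₀ hu0, mul_one, sub_self]
        have hLu : ∑ j ∈ Finset.range (d + 2), c j * u ^ q ^ (s * j) = 0 := hu
        have hru := hid u
        rw [hLu] at hru
        rw [Finset.sum_eq_zero (fun i _ => by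
          rw [hPu, zero_pow (pow_ne_zero _ hq0), mul_zero]), zero_add] at hru
        have hr : c 0 + b 0 * α = 0 := by
          rcases mul_eq_zero.mp hru.symm with h | h
          · exact h
          · exact absurd h hu0
        have hfact : Lp' q s Fq haddt hfixt c (d + 1)
            = (Lp' q s Fq haddt hfixt b d) ∘ₗ (Pm' q s Fq haddt hfixt α) := by
          apply LinearMap.ext
          intro x
          show ∑ j ∈ Finset.range (d + 1 + 1), c j * x ^ q ^ (s * j)
              = ∑ i ∈ Finset.range (d + 1), b i * (x ^ q ^ s - α * x) ^ q ^ (s * i)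
          rw [show d + 1 + 1 = d + 2 from rfl, hid x, hr, zero_mul, add_zero]
        rw [hfact]
        refine le_trans (finrank_ker_comp _ _) ?_
        have h2 := IH b ⟨d, le_refl d, by rw [hbd]; exact htop⟩
        have h3 := kerPm_le q s Fq haddt hfixt hq0 hmem α
        omega

end Aux

/-- the evaluation map of ∑ f i x^{q^{s(i+2)}} at the points a j -/
def Tmap {F : Type*} [Field F] (q s k2 : ℕ) {n : ℕ} (a : Fin n → F) :
    (Fin k2 → F) →ₗ[F] (Fin n → F) where
  toFun f j := ∑ i ∈ Finset.range k2, coefN f i * a j ^ q ^ (s * (i + 2))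
  map_add' f g := by
    funext j
    simp only [coefN_add, add_mul, Pi.add_apply]
    exact Finset.sum_add_distrib
  map_smul' γ f := by
    funext j
    simp only [coefN_smul, RingHom.id_apply, Pi.smul_apply, smul_eq_mul, Finset.mul_sum, mul_assoc]

lemma Tmap_apply {F : Type*} [Field F] (q s k2 : ℕ) {n : ℕ} (a : Fin n → F)
    (f : Fin k2 → F) (j : Fin n) :
    Tmap q s k2 a f j = ∑ i ∈ Finset.range k2, coefN f i * a j ^ q ^ (s * (i + 2)) := rfl

/-- For a generalized twisted Gabidulin code C of dimension k < n,
dim(C ∩ C^{q^s}) ≥ k - 2: the intersection contains a subspace of dimension ≥ k-2. -/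
theorem stmt_16 (p s0 m n k h s : ℕ) [Fact p.Prime] (hs0 : 0 < s0) (hm : 0 < m)
    (F : Type*) [Field F] [Fintype F] [CharP F p]
    (q : ℕ) (hq : q = p ^ s0) (hcard : Fintype.card F = q ^ m)
    (hk : 0 < k) (hkn : k < n) (hnm : n ≤ m) (hgcd : Nat.gcd m s = 1)
    (eta : F) (heta : eta ^ ((q ^ m - 1) / (q - 1)) ≠ (-1 : F) ^ (n * k))
    (Fq : Subfield F) (hFq : ∀ a : F, a ∈ Fq ↔ a ^ q = a)
    (a : Fin n → F) (ha : LinearIndependent Fq a)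
    (C Cqs : Set (Fin n → F))
    (hC : C = {c | ∃ f : Fin k → F, ∀ j : Fin n,
      c j = (∑ i : Fin k, f i * (a j) ^ (q ^ (s * (i : ℕ)))) +
        eta * (f ⟨0, hk⟩) ^ (q ^ h) * (a j) ^ (q ^ (s * k))})
    (hCqs : Cqs = {c | ∃ c' ∈ C, ∀ j : Fin n, c j = (c' j) ^ (q ^ s)}) :
    ∃ W : Submodule F (Fin n → F), (W : Set (Fin n → F)) ⊆ C ∩ Cqs ∧
      k - 2 ≤ Module.finrank F W := by
  subst hC
  subst hCqs
  have hp2 := (Fact.out : p.Prime).two_le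
  have hq2 : 2 ≤ q := by
    rw [hq]; exact le_trans hp2 (Nat.le_self_pow (by omega) p)
  have hq0 : q ≠ 0 := by omega
  have hqpow_ne : ∀ t : ℕ, q ^ t ≠ 0 := fun t => pow_ne_zero t hq0
  have haddt : ∀ (t : ℕ) (x y : F), (x + y) ^ q ^ t = x ^ q ^ t + y ^ q ^ t := by
    intro t x y
    rw [hq, ← pow_mul]
    exact add_pow_char_pow x y p (s0 * t)
  have hsubt : ∀ (t : ℕ) (x y : F), (x - y) ^ q ^ t = x ^ q ^ t - y ^ q ^ t := by
    intro t x y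
    rw [hq, ← pow_mul]
    exact sub_pow_char_pow x y (s0 * t)
  have hfixt : ∀ c : F, c ∈ Fq → ∀ t : ℕ, c ^ q ^ t = c := by
    intro c hc t
    induction t with
    | zero => simp
    | succ t ih => rw [pow_succ, pow_mul, ih, (hFq c).mp hc]
  have hmem : ∀ y : F, y ^ q ^ s = y → y ∈ Fq := fun y hy =>
    (hFq y).mpr (fixed_aux q m s hm hcard hgcd y hy)
  have hqm1 : ∀ x : F, x ^ q ^ m = x := fun x => by rw [← hcard]; exact FiniteField.pow_card x
  have hitm : ∀ (t : ℕ) (z : F), z ^ q ^ (m * t) = z := by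
    intro t
    induction t with
    | zero => intro z; simp
    | succ t ih => intro z; rw [mul_add, mul_one, pow_add, pow_mul, ih, hqm1]
  have hinv : ∀ x : F, (x ^ q ^ (s * (m - 1))) ^ q ^ s = x := by
    intro x
    rw [← pow_mul, ← pow_add, show s * (m - 1) + s = m * s by
      obtain ⟨m', rfl⟩ : ∃ m', m = m' + 1 := ⟨m - 1, by omega⟩
      rw [Nat.add_sub_cancel]; ring]
    exact hitm s x
  have hsumpow : ∀ (t : ℕ) (S : Finset ℕ) (G : ℕ → F),
      (∑ i ∈ S, G i) ^ q ^ t = ∑ i ∈ S, G i ^ q ^ t := by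
    intro t S G
    induction S using Finset.induction_on with
    | empty => simp [zero_pow (hqpow_ne t)]
    | insert _ _ haS ih => rw [Finset.sum_insert haS, Finset.sum_insert haS, haddt, ih]
  rcases le_or_gt k 2 with hk2 | hk2
  · -- trivial case k ≤ 2
    refine ⟨⊥, ?_, by rw [finrank_bot]; omega⟩
    intro x hx
    rw [Submodule.bot_coe, Set.mem_singleton_iff] at hx
    subst hx
    constructor
    · exact ⟨0, fun j => by simp [zero_pow (hqpow_ne h)]⟩
    · exact ⟨0, ⟨0, fun j => by simp [zero_pow (hqpow_ne h)]⟩,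
        fun j => by simp [zero_pow (hqpow_ne s)]⟩
  · -- main case k ≥ 3
    refine ⟨LinearMap.range (Tmap q s (k - 2) a), ?_, ?_⟩
    · intro c hc
      rw [SetLike.mem_coe, LinearMap.mem_range] at hc
      obtain ⟨f, rfl⟩ := hc
      constructor
      · -- membership in C
        refine ⟨fun i => if 2 ≤ (i : ℕ) then coefN f ((i : ℕ) - 2) else 0, fun j => ?_⟩
        have h0 : (if 2 ≤ ((⟨0, hk⟩ : Fin k) : ℕ) then coefN f (((⟨0, hk⟩ : Fin k) : ℕ) - 2) else 0)
            = (0 : F) := by norm_num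
        show (∑ i ∈ Finset.range (k - 2), coefN f i * a j ^ q ^ (s * (i + 2)))
            = (∑ i : Fin k, (if 2 ≤ (i : ℕ) then coefN f ((i : ℕ) - 2) else 0) * a j ^ q ^ (s * (i : ℕ)))
              + eta * (if 2 ≤ ((⟨0, hk⟩ : Fin k) : ℕ) then coefN f (((⟨0, hk⟩ : Fin k) : ℕ) - 2) else 0) ^ q ^ h
                * a j ^ q ^ (s * k)
        rw [h0, zero_pow (hqpow_ne h), mul_zero, zero_mul, add_zero]
        rw [Fin.sum_univ_eq_sum_range (fun i => (if 2 ≤ i then coefN f (i - 2) else 0) * a j ^ q ^ (s * i)) k]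
        have hsub : Finset.Ico 2 k ⊆ Finset.range k := by
          intro i hi; rw [Finset.mem_Ico] at hi; rw [Finset.mem_range]; omega
        have hzv : ∀ i ∈ Finset.range k, i ∉ Finset.Ico 2 k →
            (if 2 ≤ i then coefN f (i - 2) else 0) * a j ^ q ^ (s * i) = 0 := by
          intro i hi hni
          rw [Finset.mem_range] at hi
          rw [Finset.mem_Ico] at hni
          rw [if_neg (by omega), zero_mul]
        rw [← Finset.sum_subset hsub hzv, Finset.sum_Ico_eq_sum_range]
        refine Finset.sum_congr rfl fun i hi => ?_
        rw [Finset.mem_range] at hi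
        rw [if_pos (by omega : 2 ≤ 2 + i), show 2 + i - 2 = i by omega,
          show s * (2 + i) = s * (i + 2) by ring]
      · -- membership in Cqs
        refine ⟨fun j' => ∑ i ∈ Finset.range k,
            (if 1 ≤ i ∧ i ≤ k - 2 then coefN f (i - 1) ^ q ^ (s * (m - 1)) else 0) * a j' ^ q ^ (s * i),
          ⟨fun i => if 1 ≤ (i : ℕ) ∧ (i : ℕ) ≤ k - 2
              then coefN f ((i : ℕ) - 1) ^ q ^ (s * (m - 1)) else 0, fun j => ?_⟩, fun j => ?_⟩
        · -- the preimage tuple is in C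
          have h0 : (if 1 ≤ ((⟨0, hk⟩ : Fin k) : ℕ) ∧ ((⟨0, hk⟩ : Fin k) : ℕ) ≤ k - 2
              then coefN f (((⟨0, hk⟩ : Fin k) : ℕ) - 1) ^ q ^ (s * (m - 1)) else 0) = (0 : F) := by
            norm_num
          show (∑ i ∈ Finset.range k,
              (if 1 ≤ i ∧ i ≤ k - 2 then coefN f (i - 1) ^ q ^ (s * (m - 1)) else 0) * a j ^ q ^ (s * i))
            = (∑ i : Fin k, (if 1 ≤ (i : ℕ) ∧ (i : ℕ) ≤ k - 2
                then coefN f ((i : ℕ) - 1) ^ q ^ (s * (m - 1)) else 0) * a j ^ q ^ (s * (i : ℕ)))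
              + eta * (if 1 ≤ ((⟨0, hk⟩ : Fin k) : ℕ) ∧ ((⟨0, hk⟩ : Fin k) : ℕ) ≤ k - 2
                then coefN f (((⟨0, hk⟩ : Fin k) : ℕ) - 1) ^ q ^ (s * (m - 1)) else 0) ^ q ^ h
                * a j ^ q ^ (s * k)
          rw [h0, zero_pow (hqpow_ne h), mul_zero, zero_mul, add_zero]
          exact (Fin.sum_univ_eq_sum_range (fun i =>
            (if 1 ≤ i ∧ i ≤ k - 2 then coefN f (i - 1) ^ q ^ (s * (m - 1)) else 0) * a j ^ q ^ (s * i)) k).symm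
        · -- the q^s-th power relation
          show (∑ i ∈ Finset.range (k - 2), coefN f i * a j ^ q ^ (s * (i + 2)))
              = (∑ i ∈ Finset.range k,
                  (if 1 ≤ i ∧ i ≤ k - 2 then coefN f (i - 1) ^ q ^ (s * (m - 1)) else 0) * a j ^ q ^ (s * i)) ^ q ^ s
          rw [hsumpow s]
          have e1 : ∑ i ∈ Finset.range k,
              ((if 1 ≤ i ∧ i ≤ k - 2 then coefN f (i - 1) ^ q ^ (s * (m - 1)) else 0) * a j ^ q ^ (s * i)) ^ q ^ s
              = ∑ i ∈ Finset.range k,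
              (if 1 ≤ i ∧ i ≤ k - 2 then coefN f (i - 1) * a j ^ q ^ (s * (i + 1)) else 0) := by
            refine Finset.sum_congr rfl fun i hi => ?_
            rw [mul_pow]
            by_cases hcond : 1 ≤ i ∧ i ≤ k - 2
            · rw [if_pos hcond, if_pos hcond, hinv (coefN f (i - 1)), ← pow_mul, ← pow_add,
                show s * i + s = s * (i + 1) by ring]
            · rw [if_neg hcond, if_neg hcond, zero_pow (hqpow_ne s), zero_mul]
          rw [e1]
          have hsub : Finset.Ico 1 (k - 1) ⊆ Finset.range k := by
            intro i hi; rw [Finset.mem_Ico] at hi; rw [Finset.mem_range]; omega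
          have hzv : ∀ i ∈ Finset.range k, i ∉ Finset.Ico 1 (k - 1) →
              (if 1 ≤ i ∧ i ≤ k - 2 then coefN f (i - 1) * a j ^ q ^ (s * (i + 1)) else 0) = 0 := by
            intro i hi hni
            rw [Finset.mem_range] at hi
            rw [Finset.mem_Ico] at hni
            rw [if_neg (by omega)]
          rw [← Finset.sum_subset hsub hzv, Finset.sum_Ico_eq_sum_range,
            show k - 1 - 1 = k - 2 by omega]
          refine Finset.sum_congr rfl fun i hi => ?_
          rw [Finset.mem_range] at hi
          rw [if_pos (by omega : 1 ≤ 1 + i ∧ 1 + i ≤ k - 2), show 1 + i - 1 = i by omega,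
            show s * (1 + i + 1) = s * (i + 2) by ring]
    · -- the dimension bound
      have hkerT : LinearMap.ker (Tmap q s (k - 2) a) = ⊥ := by
        rw [LinearMap.ker_eq_bot']
        intro f hf
        by_contra hf0
        obtain ⟨i0, hi0⟩ := Function.ne_iff.mp hf0
        have hex : ∃ i, i ≤ k - 3 ∧ coefN f i ≠ 0 := by
          refine ⟨(i0 : ℕ), by have := i0.isLt; omega, ?_⟩
          rw [coefN, dif_pos i0.isLt]
          simpa using hi0
        have hTf0 : ∀ j, (∑ i ∈ Finset.range (k - 2), coefN f i * a j ^ q ^ (s * (i + 2))) = 0 :=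
          fun j => by simpa [Tmap_apply] using congrFun hf j
        have hker1 : ∀ j : Fin n, a j ^ q ^ (s * 2)
            ∈ LinearMap.ker (Lp' q s Fq haddt hfixt (coefN f) (k - 3)) := by
          intro j
          rw [LinearMap.mem_ker]
          show ∑ i ∈ Finset.range (k - 3 + 1), coefN f i * (a j ^ q ^ (s * 2)) ^ q ^ (s * i) = 0
          rw [show k - 3 + 1 = k - 2 by omega]
          have he : ∑ i ∈ Finset.range (k - 2), coefN f i * (a j ^ q ^ (s * 2)) ^ q ^ (s * i)
              = ∑ i ∈ Finset.range (k - 2), coefN f i * a j ^ q ^ (s * (i + 2)) := by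
            refine Finset.sum_congr rfl fun i _ => ?_
            rw [← pow_mul, ← pow_add, show s * 2 + s * i = s * (i + 2) by ring]
          rw [he]
          exact hTf0 j
        have hbd := kerbound q s Fq haddt hfixt hq0 hsubt hmem (k - 3) (coefN f) hex
        have hMker := Mq_ker q Fq haddt hfixt hq0 (s * 2)
        have hind := ha.map' (Mq q Fq haddt hfixt (s * 2)) hMker
        have hspan : Submodule.span Fq (Set.range (⇑(Mq q Fq haddt hfixt (s * 2)) ∘ a))
            ≤ LinearMap.ker (Lp' q s Fq haddt hfixt (coefN f) (k - 3)) := by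
          rw [Submodule.span_le]
          rintro _ ⟨j, rfl⟩
          exact hker1 j
        have hcard2 := finrank_span_eq_card (R := Fq) hind
        have hn2 : n ≤ finrank Fq (LinearMap.ker (Lp' q s Fq haddt hfixt (coefN f) (k - 3))) := by
          calc n = Fintype.card (Fin n) := (Fintype.card_fin n).symm
            _ = finrank Fq (Submodule.span Fq (Set.range (⇑(Mq q Fq haddt hfixt (s * 2)) ∘ a))) :=
                hcard2.symm
            _ ≤ _ := Submodule.finrank_mono hspan
        omega
      have hfr := LinearMap.finrank_range_add_finrank_ker (Tmap q s (k - 2) a)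
      rw [hkerT, finrank_bot, add_zero] at hfr
      rw [hfr, finrank_pi, Fintype.card_fin]
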